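/- Euler's identity: for all complex z not an integer multiple of π, 1/sin(z)² = Σ_{n∈ℤ} 1/(z − nπ)². -/

import Mathlib

open scoped Real
open Complex Set MeasureTheory

lemma summable_aux (w : ℂ) : Summable (fun n : ℤ => 1 / (w - (n : ℂ)) ^ 2) := by
  have hg : Summable (fun n : ℤ => 4 / (n : ℝ) ^ 2) := by
    simpa [div_eq_mul_inv, mul_comm] using
      (Real.summable_one_div_int_pow (p := 2)).mpr one_lt_two |>.mul_left (4:ℝ)
  apply Summable.of_norm_bounded_eventually hg
  have hfin : {n : ℤ | ((|n| : ℤ) : ℝ) < 2 * ‖w‖ + 2}.Finite := by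
    apply (Set.finite_Icc (-(⌈2 * ‖w‖ + 2⌉)) ⌈2 * ‖w‖ + 2⌉).subset
    intro n hn
    simp only [Set.mem_setOf_eq] at hn
    have h1 : (|n| : ℤ) ≤ ⌈2 * ‖w‖ + 2⌉ := by
      have := Int.le_ceil (2 * ‖w‖ + 2)
      exact_mod_cast hn.le.trans this
    rw [Set.mem_Icc]
    constructor <;> [linarith [neg_abs_le n]; linarith [le_abs_self n]]
  rw [Filter.eventually_cofinite]
  apply hfin.subset
  intro n hn
  simp only [Set.mem_setOf_eq, not_le] at hn ⊢
  by_contra hcon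
  push_neg at hcon
  have ha : (2 : ℝ) * ‖w‖ + 2 ≤ |(n : ℝ)| := by
    have h0 : ((|n| : ℤ) : ℝ) = |(n : ℝ)| := by push_cast; rfl
    linarith [h0 ▸ hcon]
  set a : ℝ := |(n : ℝ)| with hadef
  have ha2 : (2 : ℝ) ≤ a := by have := norm_nonneg w; linarith
  have hnorm : a / 2 ≤ ‖w - (n : ℂ)‖ := by
    have h1 : ‖(n : ℂ)‖ - ‖w‖ ≤ ‖(n : ℂ) - w‖ := norm_sub_norm_le _ _
    have h2 : ‖(n : ℂ) - w‖ = ‖w - (n : ℂ)‖ := norm_sub_rev _ _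
    have h3 : ‖(n : ℂ)‖ = a := by rw [hadef]; push_cast; simp [Complex.norm_intCast]
    rw [h2, h3] at h1
    linarith
  refine absurd hn (not_lt.mpr ?_)
  have hpos : (0:ℝ) < a / 2 := by linarith
  calc ‖1 / (w - (n:ℂ)) ^ 2‖ = 1 / ‖w - (n:ℂ)‖ ^ 2 := by
        rw [norm_div, norm_one, norm_pow]
    _ ≤ 1 / (a / 2) ^ 2 := by
        apply one_div_le_one_div_of_le (by positivity)
        exact pow_le_pow_left₀ hpos.le hnorm 2
    _ = 4 / (n : ℝ) ^ 2 := by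
        rw [hadef, div_pow, ← _root_.sq_abs (n:ℝ)]
        have h4 : (0:ℝ) < |(n:ℝ)| ^ 2 := by positivity
        field_simp
        norm_num



lemma key_tsum (w : ℂ) (hw : ∀ n : ℤ, w ≠ (n : ℂ)) :
    ∑' n : ℤ, 1 / (w - (n : ℂ)) ^ 2 = (π : ℂ) ^ 2 / Complex.sin (π * w) ^ 2 := by
  haveI : Fact (0 < 2 * π) := ⟨by positivity⟩
  have hpi : ((2 * π : ℝ) : ℂ) ≠ 0 := by simp [Real.pi_ne_zero]
  have hpi' : ((π : ℝ) : ℂ) ≠ 0 := by simp [Real.pi_ne_zero]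
  set q : ℂ := Complex.exp (2 * π * Complex.I * w) with hqdef
  have hq1 : q ≠ 1 := by
    intro h
    obtain ⟨n, hn⟩ := Complex.exp_eq_one_iff.mp h
    apply hw n
    have h2 : (2 * (π:ℂ) * Complex.I) ≠ 0 := by
      simp [Real.pi_ne_zero, Complex.I_ne_zero]
    have : (2 * (π:ℂ) * Complex.I) * w = (2 * (π:ℂ) * Complex.I) * n := by
      rw [hn]; ring
    exact mul_left_cancel₀ h2 this
  have h1q : (1 : ℂ) - q ≠ 0 := sub_ne_zero.mpr (Ne.symm hq1)
  have hq1' : q - 1 ≠ 0 := sub_ne_zero.mpr hq1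
  obtain ⟨A, hA⟩ : ∃ A : ℂ, A * (1 - q) = 2 * π * q :=
    ⟨2 * π * q / (1 - q), div_mul_cancel₀ _ h1q⟩
  set f : ℝ → ℂ := fun t => (A + t) * Complex.exp (Complex.I * w * t) with hfdef
  have hcont : Continuous f := by fun_prop
  have hper : f 0 = f (2 * π) := by
    have he : Complex.exp (Complex.I * w * ((2 * π : ℝ) : ℂ)) = q := by
      rw [hqdef]; congr 1; push_cast; ring
    simp only [hfdef, Complex.ofReal_zero, mul_zero, Complex.exp_zero, mul_one, add_zero,
      Complex.ofReal_mul, Complex.ofReal_ofNat]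
    rw [show Complex.I * w * (2 * (π:ℂ)) = Complex.I * w * ((2 * π : ℝ) : ℂ) by push_cast; ring,
      he]
    linear_combination hA
  set F : C(AddCircle (2 * π), ℂ) :=
    ⟨AddCircle.liftIco (2 * π) 0 f, AddCircle.liftIco_zero_continuous hper hcont.continuousOn⟩
    with hFdef
  have hFcoeff : ∀ n : ℤ, fourierCoeff (⇑F) n = (q - 1) / (2 * π) * (1 / (w - n) ^ 2) := by
    intro n
    have hwn : w - (n : ℂ) ≠ 0 := sub_ne_zero.mpr (hw n)
    set w' : ℂ := Complex.I * (w - n) with hw'def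
    have hw' : w' ≠ 0 := mul_ne_zero Complex.I_ne_zero hwn
    show fourierCoeff (AddCircle.liftIco (2 * π) 0 f) n = _
    rw [fourierCoeff_liftIco_eq f n, fourierCoeffOn_eq_integral]
    have hint : ∀ x : ℝ,
        (fourier (-n) (x : AddCircle (0 + 2 * π - 0)) : ℂ) • f x
          = (A + x) * Complex.exp (w' * x) := by
      intro x
      rw [fourier_coe_apply, smul_eq_mul, hfdef]
      simp only []
      rw [mul_comm, mul_assoc, ← Complex.exp_add]
      congr 2
      have : ((0 + 2 * π - 0 : ℝ) : ℂ) = ((2 * π : ℝ) : ℂ) := by norm_num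
      rw [this]
      field_simp
      push_cast
      ring
    rw [intervalIntegral.integral_congr (fun x _ => hint x)]
    have hderiv : ∀ x ∈ Set.uIcc (0 : ℝ) (0 + 2 * π),
        HasDerivAt (fun t : ℝ => ((A + t) / w' - 1 / w' ^ 2) * Complex.exp (w' * t))
          ((A + x) * Complex.exp (w' * x)) x := by
      intro x _
      have h1 : HasDerivAt (fun z : ℂ => (A + z) / w' - 1 / w' ^ 2) (1 / w') (x : ℂ) :=
        (((hasDerivAt_id (x : ℂ)).const_add A).div_const w').sub_const _
      have h2 : HasDerivAt (fun z : ℂ => Complex.exp (w' * z))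
          (Complex.exp (w' * (x : ℂ)) * w') (x : ℂ) := by
        simpa using ((hasDerivAt_id ((x : ℝ) : ℂ)).const_mul w').cexp
      have h3 := (h1.mul h2).comp_ofReal
      convert h3 using 1
      · rfl
      field_simp
      ring
    have hintg : IntervalIntegrable (fun t : ℝ => (A + t) * Complex.exp (w' * t))
        volume 0 (0 + 2 * π) := by
      apply Continuous.intervalIntegrable
      fun_prop
    rw [intervalIntegral.integral_eq_sub_of_hasDerivAt hderiv hintg]
    have hq' : Complex.exp (w' * ((0 + 2 * π : ℝ) : ℂ)) = q := by
      rw [show w' * ((0 + 2 * π : ℝ) : ℂ)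
            = 2 * π * Complex.I * w + ((-n : ℤ) : ℂ) * (2 * π * Complex.I) by push_cast; ring,
        Complex.exp_add, Complex.exp_int_mul_two_pi_mul_I, mul_one, hqdef]
    rw [hq']
    have hw2 : w' ^ 2 = -((w - n) ^ 2) := by
      rw [hw'def, mul_pow, Complex.I_sq]; ring
    simp only [Complex.ofReal_zero, mul_zero, Complex.exp_zero, mul_one, add_zero,
      Complex.ofReal_add, Complex.ofReal_mul, Complex.ofReal_ofNat, zero_add, sub_zero]
    rw [Complex.real_smul]
    push_cast
    rw [hw2, div_neg]
    field_simp
    linear_combination (-((w - (n:ℂ)) ^ 2)) * hA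
  have hsummable : Summable (fourierCoeff (⇑F)) :=
    (((summable_aux w).mul_left ((q - 1) / (2 * π))).congr fun n => (hFcoeff n).symm)
  have hsum := has_pointwise_sum_fourier_series_of_summable hsummable (0 : AddCircle (2 * π))
  have hF0 : F (0 : AddCircle (2 * π)) = A := by
    show AddCircle.liftIco (2 * π) 0 f (0 : AddCircle (2 * π)) = A
    have h0 : ((0 : ℝ) : AddCircle (2 * π)) = 0 := by norm_num
    rw [← h0, AddCircle.liftIco_zero_coe_apply (by constructor <;> [rfl; positivity])]
    simp [hfdef]
  have hsum2 : HasSum (fun n : ℤ => (q - 1) / (2 * π) * (1 / (w - n) ^ 2)) A := by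
    rw [hF0] at hsum
    simpa only [hFcoeff, fourier_eval_zero, smul_eq_mul, mul_one] using hsum
  have htsum : (q - 1) / (2 * π) * ∑' n : ℤ, 1 / (w - (n : ℂ)) ^ 2 = A := by
    rw [← tsum_mul_left]
    exact hsum2.tsum_eq
  have hsin0 : Complex.sin ((π : ℂ) * w) ≠ 0 := by
    rw [Ne, Complex.sin_eq_zero_iff]
    rintro ⟨k, hk⟩
    exact hw k (mul_left_cancel₀ hpi' (by rw [hk]; ring))
  have hsin : Complex.sin ((π : ℂ) * w) ^ 2 * (4 * q) = -((q - 1) ^ 2) := by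
    have hx : Complex.exp ((π : ℂ) * w * Complex.I) ≠ 0 := Complex.exp_ne_zero _
    have hy : Complex.exp (-((π : ℂ) * w) * Complex.I)
        = (Complex.exp ((π : ℂ) * w * Complex.I))⁻¹ := by
      rw [← Complex.exp_neg]; congr 1; ring
    have hq2 : q = Complex.exp ((π : ℂ) * w * Complex.I) ^ 2 := by
      rw [sq, ← Complex.exp_add, hqdef]; congr 1; ring
    rw [Complex.sin, hy, hq2]
    field_simp
    linear_combination (4 - 8 * Complex.exp ((π:ℂ) * w * Complex.I) ^ 2
      + 4 * Complex.exp ((π:ℂ) * w * Complex.I) ^ 4) * Complex.I_sq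
  have hS : (∑' n : ℤ, 1 / (w - (n : ℂ)) ^ 2) = 2 * π / (q - 1) * A := by
    rw [← htsum]; field_simp
  rw [hS]
  field_simp
  have hq0 : q ≠ 0 := Complex.exp_ne_zero _
  refine mul_right_cancel₀ (show (4 : ℂ) * q ≠ 0 by simp [hq0]) ?_
  linear_combination (2 * A) * hsin + (2 * (q - 1)) * hA

theorem stmt11 (z : ℂ) (hz : ∀ n : ℤ, z ≠ (n : ℂ) * π) :
    1 / Complex.sin z ^ 2 = ∑' n : ℤ, 1 / (z - (n : ℂ) * π) ^ 2 := by
  have hpi' : ((π : ℝ) : ℂ) ≠ 0 := by simp [Real.pi_ne_zero]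
  set w : ℂ := z / π with hwdef
  have hzw : z = (π : ℂ) * w := by rw [hwdef]; field_simp
  have hw : ∀ n : ℤ, w ≠ (n : ℂ) := fun n h => hz n (by rw [hzw, h]; ring)
  have hterm : ∀ n : ℤ, 1 / (z - (n : ℂ) * π) ^ 2
      = 1 / (π : ℂ) ^ 2 * (1 / (w - (n : ℂ)) ^ 2) := by
    intro n
    rw [show z - (n : ℂ) * π = (π : ℂ) * (w - n) by rw [hzw]; ring, mul_pow,
      one_div_mul_one_div]
  rw [tsum_congr hterm, tsum_mul_left, key_tsum w hw, ← hzw, div_mul_div_comm, one_mul,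
    one_div]
  simpa using (mul_div_mul_left 1 (Complex.sin z ^ 2) (pow_ne_zero 2 hpi')).symm
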